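/- Attainment and completeness for the rank-one tropical optimization problem: under the hypotheses Tr(B) ≤ 0, h regular with h⁻B*g ≤ 0, p, q nonzero with q⁻p > −∞, set θ = ⊕_{0≤i+j≤n−2}(h⁻B^ip)(q⁻B^jg) ⊕ q⁻B*p and G = ⊕_{0≤i+j≤n−2} θ^{−1}B^i p q⁻ B^j ⊕ B*. Then a regular vector x satisfies the constraints Bx ≤ x, g ≤ x ≤ h and achieves x⁻pq⁻x = θ if and only if x = G u for some nonzero vector u with g ≤ u ≤ (h⁻G)⁻. -/

import Mathlib

noncomputable section
abbrev T := WithBot ℝ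

/-- Tropical (max-plus) sum over a finite family. -/
def tSum {n : ℕ} (f : Fin n → T) : T := Finset.univ.sup f

/-- Tropical matrix product. -/
def tMulM {m n p : ℕ} (A : Matrix (Fin m) (Fin n) T) (B : Matrix (Fin n) (Fin p) T) :
    Matrix (Fin m) (Fin p) T := fun i j => tSum fun k => A i k + B k j

/-- Tropical identity matrix. -/
def tId (n : ℕ) : Matrix (Fin n) (Fin n) T := fun i j => if i = j then (0 : T) else ⊥

/-- Tropical matrix power. -/
def tpow {n : ℕ} (A : Matrix (Fin n) (Fin n) T) : ℕ → Matrix (Fin n) (Fin n) T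
  | 0 => tId n
  | k + 1 => tMulM (tpow A k) A

/-- Tropical trace. -/
def tTr {n : ℕ} (A : Matrix (Fin n) (Fin n) T) : T := tSum fun k => A k k

/-- Multiplicative conjugate of a scalar: negation on finite entries, -∞ ↦ -∞. -/
def tconj (t : T) : T := WithBot.map (fun a : ℝ => -a) t

/-- Kleene star (for an n×n matrix): I ⊕ A ⊕ ⋯ ⊕ A^(n-1). -/
def kstar {n : ℕ} (A : Matrix (Fin n) (Fin n) T) : Matrix (Fin n) (Fin n) T :=
  fun i j => tSum fun k : Fin n => tpow A (k : ℕ) i j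

/-- Tr(A) = tr A ⊕ ⋯ ⊕ tr Aⁿ. -/
def TrB {n : ℕ} (A : Matrix (Fin n) (Fin n) T) : T := tSum fun k : Fin n => tTr (tpow A ((k : ℕ) + 1))

/-- Tropical root: t^{1/k} = t/k. -/
def tdiv (t : T) (k : ℕ) : T := WithBot.map (fun a : ℝ => a / k) t

/-- Row vector × matrix × column vector. -/
def vMv {n : ℕ} (u : Fin n → T) (A : Matrix (Fin n) (Fin n) T) (v : Fin n → T) : T :=
  tSum fun i => u i + tSum fun j => A i j + v j

/-- The rank-one matrix p q⁻. -/
def pqm {n : ℕ} (p q : Fin n → T) : Matrix (Fin n) (Fin n) T := fun i j => p i + tconj (q j)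

/-- Pairs (i,j) of exponents with 0 ≤ i + j ≤ n − 2. -/
def pairSet (n : ℕ) : Finset (ℕ × ℕ) :=
  (Finset.range n ×ˢ Finset.range n).filter (fun ij => ij.1 + ij.2 + 2 ≤ n)

namespace Trop

lemma tbot_add (a : T) : (⊥ : T) + a = ⊥ := WithBot.bot_add a
lemma tadd_bot (a : T) : a + (⊥ : T) = ⊥ := WithBot.add_bot a

lemma finsup_add {ι : Type*} (s : Finset ι) (f : ι → T) (c : T) :
    s.sup f + c = s.sup fun i => f i + c := by
  induction s using Finset.cons_induction with
  | empty => simp [tbot_add]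
  | cons a s ha ih =>
      rw [Finset.sup_cons, Finset.sup_cons, ← ih]
      rcases le_total (f a) (s.sup f) with hle | hle
      · rw [sup_of_le_right hle, sup_of_le_right (add_le_add_left hle c)]
      · rw [sup_of_le_left hle, sup_of_le_left (add_le_add_left hle c)]

lemma add_finsup {ι : Type*} (s : Finset ι) (f : ι → T) (c : T) :
    c + s.sup f = s.sup fun i => c + f i := by
  rw [add_comm, finsup_add]; simp [add_comm]

lemma tSum_le {n : ℕ} {f : Fin n → T} {c : T} (h : ∀ i, f i ≤ c) : tSum f ≤ c :=
  Finset.sup_le fun i _ => h i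

lemma le_tSum {n : ℕ} (f : Fin n → T) (i : Fin n) : f i ≤ tSum f :=
  Finset.le_sup (Finset.mem_univ i)

lemma tSum_mono {n : ℕ} {f g : Fin n → T} (h : ∀ i, f i ≤ g i) : tSum f ≤ tSum g :=
  tSum_le fun i => (h i).trans (le_tSum g i)

lemma tSum_add_const {n : ℕ} (f : Fin n → T) (c : T) :
    tSum (fun i => f i + c) = tSum f + c := (finsup_add _ _ _).symm

lemma const_add_tSum {n : ℕ} (f : Fin n → T) (c : T) :
    tSum (fun i => c + f i) = c + tSum f := (add_finsup _ _ _).symm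

lemma tSum_comm {n m : ℕ} (f : Fin n → Fin m → T) :
    tSum (fun i => tSum fun j => f i j) = tSum (fun j => tSum fun i => f i j) := by
  simpa [tSum] using Finset.sup_comm Finset.univ Finset.univ f

lemma tSum_max {n : ℕ} (f g : Fin n → T) :
    tSum (fun i => max (f i) (g i)) = max (tSum f) (tSum g) := by
  refine le_antisymm (tSum_le fun i => max_le_max (le_tSum f i) (le_tSum g i)) ?_
  exact max_le (tSum_mono fun i => le_max_left _ _) (tSum_mono fun i => le_max_right _ _)

lemma tSum_ite {n : ℕ} (i : Fin n) (a : T) :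
    tSum (fun k => if k = i then a else ⊥) = a := by
  apply le_antisymm
  · exact tSum_le fun k => by split <;> simp
  · simpa using le_tSum (fun k => if k = i then a else ⊥) i

-- vector ops
def tMulV {m n : ℕ} (A : Matrix (Fin m) (Fin n) T) (v : Fin n → T) : Fin m → T :=
  fun i => tSum fun j => A i j + v j

def vMulT {m n : ℕ} (v : Fin m → T) (A : Matrix (Fin m) (Fin n) T) : Fin n → T :=
  fun j => tSum fun i => v i + A i j

lemma tMulV_mono_v {m n : ℕ} (A : Matrix (Fin m) (Fin n) T) {v w : Fin n → T}
    (h : ∀ j, v j ≤ w j) (i : Fin m) : tMulV A v i ≤ tMulV A w i :=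
  tSum_mono fun j => add_le_add_right (h j) _

lemma tMulV_mono_A {m n : ℕ} {A B : Matrix (Fin m) (Fin n) T}
    (h : ∀ i j, A i j ≤ B i j) (v : Fin n → T) (i : Fin m) : tMulV A v i ≤ tMulV B v i :=
  tSum_mono fun j => add_le_add_left (h i j) _

lemma tMulM_mono {m n p : ℕ} {A B : Matrix (Fin m) (Fin n) T} {C D : Matrix (Fin n) (Fin p) T}
    (h1 : ∀ i j, A i j ≤ B i j) (h2 : ∀ i j, C i j ≤ D i j) (i : Fin m) (j : Fin p) :
    tMulM A C i j ≤ tMulM B D i j :=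
  tSum_mono fun k => add_le_add (h1 i k) (h2 k j)

lemma tMulV_mulM {m n p : ℕ} (A : Matrix (Fin m) (Fin n) T) (B : Matrix (Fin n) (Fin p) T)
    (v : Fin p → T) (i : Fin m) : tMulV (tMulM A B) v i = tMulV A (tMulV B v) i := by
  unfold tMulV tMulM
  calc tSum (fun j => tSum (fun k => A i k + B k j) + v j)
      = tSum (fun j => tSum (fun k => (A i k + B k j) + v j)) := by
        congr 1; funext j; rw [tSum_add_const]
    _ = tSum (fun k => tSum (fun j => (A i k + B k j) + v j)) := tSum_comm _
    _ = tSum (fun k => A i k + tSum (fun j => B k j + v j)) := by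
        congr 1; funext k; rw [← const_add_tSum]; congr 1; funext j; rw [add_assoc]

lemma vMulT_mulM {m n p : ℕ} (v : Fin m → T) (A : Matrix (Fin m) (Fin n) T)
    (B : Matrix (Fin n) (Fin p) T) (j : Fin p) :
    vMulT v (tMulM A B) j = vMulT (vMulT v A) B j := by
  unfold vMulT tMulM
  calc tSum (fun i => v i + tSum (fun k => A i k + B k j))
      = tSum (fun i => tSum (fun k => v i + (A i k + B k j))) := by
        congr 1; funext i; rw [const_add_tSum]
    _ = tSum (fun k => tSum (fun i => v i + (A i k + B k j))) := tSum_comm _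
    _ = tSum (fun k => tSum (fun i => v i + A i k) + B k j) := by
        congr 1; funext k; rw [← tSum_add_const]; congr 1; funext i; rw [add_assoc]

lemma tMulM_apply {m n p : ℕ} (A : Matrix (Fin m) (Fin n) T) (B : Matrix (Fin n) (Fin p) T)
    (i : Fin m) (j : Fin p) : tMulM A B i j = tMulV A (fun k => B k j) i := rfl

lemma tMulM_assoc {m n p q : ℕ} (A : Matrix (Fin m) (Fin n) T) (B : Matrix (Fin n) (Fin p) T)
    (C : Matrix (Fin p) (Fin q) T) (i : Fin m) (j : Fin q) :
    tMulM (tMulM A B) C i j = tMulM A (tMulM B C) i j := by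
  rw [tMulM_apply, tMulV_mulM, tMulM_apply]
  rfl

lemma tId_mulM {n p : ℕ} (A : Matrix (Fin n) (Fin p) T) (i : Fin n) (j : Fin p) :
    tMulM (tId n) A i j = A i j := by
  unfold tMulM tId
  rw [show (fun k => (if i = k then (0:T) else ⊥) + A k j)
      = fun k => if k = i then A i j else ⊥ by
    funext k; rcases eq_or_ne k i with rfl | hk
    · simp
    · simp [hk, Ne.symm hk, tbot_add], tSum_ite]

lemma mulM_tId {m n : ℕ} (A : Matrix (Fin m) (Fin n) T) (i : Fin m) (j : Fin n) :
    tMulM A (tId n) i j = A i j := by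
  unfold tMulM tId
  rw [show (fun k => A i k + (if k = j then (0:T) else ⊥))
      = fun k => if k = j then A i j else ⊥ by
    funext k; rcases eq_or_ne k j with rfl | hk
    · simp
    · simp [hk, tadd_bot], tSum_ite]

lemma tpow_succ_left {n : ℕ} (A : Matrix (Fin n) (Fin n) T) (k : ℕ) (i j : Fin n) :
    tpow A (k + 1) i j = tMulM A (tpow A k) i j := by
  induction k generalizing i j with
  | zero => show tMulM (tId n) A i j = tMulM A (tId n) i j; rw [tId_mulM, mulM_tId]
  | succ k ih =>
      show tMulM (tpow A (k+1)) A i j = tMulM A (tMulM (tpow A k) A) i j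
      rw [← tMulM_assoc]
      unfold tMulM
      congr 1; funext l; rw [ih]; rfl

lemma tpow_add {n : ℕ} (A : Matrix (Fin n) (Fin n) T) (a b : ℕ) (i j : Fin n) :
    tpow A (a + b) i j = tMulM (tpow A a) (tpow A b) i j := by
  induction b generalizing i j with
  | zero => show tpow A a i j = tMulM (tpow A a) (tId n) i j; rw [mulM_tId]
  | succ b ih =>
      show tMulM (tpow A (a+b)) A i j = _
      calc tMulM (tpow A (a + b)) A i j
          = tMulM (tMulM (tpow A a) (tpow A b)) A i j := by
            unfold tMulM; congr 1; funext l; rw [ih]; rfl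
        _ = tMulM (tpow A a) (tMulM (tpow A b) A) i j := tMulM_assoc _ _ _ _ _
        _ = _ := rfl

lemma tpow_one {n : ℕ} (A : Matrix (Fin n) (Fin n) T) (i j : Fin n) :
    tpow A 1 i j = A i j := tId_mulM A i j

lemma tpow_mono {n : ℕ} {A B : Matrix (Fin n) (Fin n) T} (h : ∀ i j, A i j ≤ B i j)
    (k : ℕ) (i j : Fin n) : tpow A k i j ≤ tpow B k i j := by
  induction k generalizing i j with
  | zero => exact le_rfl
  | succ k ih => exact tMulM_mono ih h i j

lemma tpow_le_kstar_of_lt {n : ℕ} (A : Matrix (Fin n) (Fin n) T) {k : ℕ} (hk : k < n)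
    (i j : Fin n) : tpow A k i j ≤ kstar A i j :=
  le_tSum (fun m : Fin n => tpow A (m : ℕ) i j) ⟨k, hk⟩

lemma tMulV_tpow_le {n : ℕ} {B : Matrix (Fin n) (Fin n) T} {x : Fin n → T}
    (hx : ∀ i, tMulV B x i ≤ x i) (k : ℕ) (i : Fin n) : tMulV (tpow B k) x i ≤ x i := by
  induction k generalizing i with
  | zero =>
      unfold tMulV
      refine tSum_le fun j => ?_
      show tId n i j + x j ≤ x i
      unfold tId; rcases eq_or_ne i j with rfl | hij
      · simp
      · simp [hij, tbot_add]
  | succ k ih =>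
      have : tMulV (tpow B (k+1)) x i = tMulV B (tMulV (tpow B k) x) i := by
        rw [show tMulV (tpow B (k+1)) x i = tMulV (tMulM B (tpow B k)) x i by
          unfold tMulV; congr 1; funext j; rw [tpow_succ_left], tMulV_mulM]
      rw [this]
      exact le_trans (tMulV_mono_v B (fun j => ih j) i) (hx i)

end Trop

namespace Trop
variable {n : ℕ}

def lw (M : Matrix (Fin n) (Fin n) T) : List (Fin n) → T
  | [] => 0
  | [_] => 0
  | a :: b :: l => M a b + lw M (b :: l)

lemma lw_cons₂ (M : Matrix (Fin n) (Fin n) T) (a b : Fin n) (l : List (Fin n)) :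
    lw M (a :: b :: l) = M a b + lw M (b :: l) := rfl

lemma lw_append (M : Matrix (Fin n) (Fin n) T) (l₁ : List (Fin n)) (a : Fin n)
    (l₂ : List (Fin n)) : lw M (l₁ ++ a :: l₂) = lw M (l₁ ++ [a]) + lw M (a :: l₂) := by
  induction l₁ with
  | nil =>
      show lw M (a :: l₂) = lw M [a] + lw M (a :: l₂)
      show lw M (a :: l₂) = 0 + lw M (a :: l₂)
      rw [zero_add]
  | cons b l₁ ih =>
      cases l₁ with
      | nil =>
          show lw M (b :: a :: l₂) = lw M [b, a] + lw M (a :: l₂)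
          rw [lw_cons₂, show lw M [b, a] = M b a + lw M [a] from rfl,
            show lw M [a] = 0 from rfl, add_zero]
      | cons c l₁ =>
          have ih' : lw M (c :: (l₁ ++ a :: l₂)) = lw M (c :: (l₁ ++ [a])) + lw M (a :: l₂) := by
            simpa using ih
          show lw M (b :: c :: (l₁ ++ a :: l₂)) = lw M (b :: c :: (l₁ ++ [a])) + lw M (a :: l₂)
          rw [lw_cons₂, lw_cons₂, ih', add_assoc]

lemma lw_le_tpow (M : Matrix (Fin n) (Fin n) T) :
    ∀ (l : List (Fin n)) (a : Fin n),
      lw M (a :: l) ≤ tpow M l.length a ((a :: l).getLast (List.cons_ne_nil a l)) := by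
  intro l
  induction l with
  | nil =>
      intro a
      show (0 : T) ≤ tId n a a
      simp [tId]
  | cons b l ih =>
      intro a
      rw [lw_cons₂]
      have h1 : (a :: b :: l).getLast (List.cons_ne_nil _ _)
          = (b :: l).getLast (List.cons_ne_nil _ _) := List.getLast_cons_cons (a := a) (b := b) (l := l)
      rw [h1]
      calc M a b + lw M (b :: l)
          ≤ M a b + tpow M l.length b ((b :: l).getLast (List.cons_ne_nil _ _)) :=
            add_le_add_right (ih b) _
        _ ≤ tSum (fun m => M a m + tpow M l.length m ((b :: l).getLast (List.cons_ne_nil _ _))) :=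
            le_tSum (fun m => M a m + tpow M l.length m ((b :: l).getLast (List.cons_ne_nil _ _))) b
        _ = tpow M (l.length + 1) a ((b :: l).getLast (List.cons_ne_nil _ _)) := by
            rw [tpow_succ_left]; rfl

lemma ofFn_snoc {k : ℕ} (v : Fin k → Fin n) (m : Fin n) :
    List.ofFn (Fin.snoc v m : Fin (k+1) → Fin n) = List.ofFn v ++ [m] := by
  rw [List.ofFn_succ']
  simp [List.concat_eq_append]

lemma tpow_succ_eq (M : Matrix (Fin n) (Fin n) T) (k : ℕ) (i j : Fin n) :
    tpow M (k + 1) i j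
      = (Finset.univ : Finset (Fin k → Fin n)).sup (fun v => lw M (i :: List.ofFn v ++ [j])) := by
  induction k generalizing j with
  | zero =>
      apply le_antisymm
      · rw [show tpow M 1 i j = M i j from tpow_one M i j]
        have : lw M (i :: List.ofFn (Fin.elim0 : Fin 0 → Fin n) ++ [j]) = M i j := by
          show lw M [i, j] = M i j
          show M i j + (0 : T) = M i j
          rw [add_zero]
        calc M i j = lw M (i :: List.ofFn (Fin.elim0 : Fin 0 → Fin n) ++ [j]) := this.symm
          _ ≤ _ := Finset.le_sup (f := fun v : Fin 0 → Fin n => lw M (i :: List.ofFn v ++ [j]))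
            (Finset.mem_univ _)
      · apply Finset.sup_le; intro v _
        rw [List.ofFn_zero]
        show M i j + (0 : T) ≤ tpow M 1 i j
        rw [add_zero, tpow_one]
  | succ k ih =>
      show tSum (fun m => tpow M (k+1) i m + M m j) = _
      apply le_antisymm
      · apply tSum_le; intro m
        rw [ih m, finsup_add]
        apply Finset.sup_le; intro v _
        have key : lw M (i :: List.ofFn v ++ [m]) + M m j
            = lw M (i :: List.ofFn (Fin.snoc v m : Fin (k+1) → Fin n) ++ [j]) := by
          rw [ofFn_snoc]
          have : (i :: (List.ofFn v ++ [m])) ++ [j] = (i :: List.ofFn v) ++ (m :: [j]) := by simp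
          rw [show i :: (List.ofFn v ++ [m]) ++ [j] = (i :: List.ofFn v) ++ (m :: [j]) by simp,
            lw_append M (i :: List.ofFn v) m [j]]
          show _ = lw M ((i :: List.ofFn v) ++ [m]) + (M m j + 0)
          rw [add_zero]
        rw [key]
        exact Finset.le_sup (f := fun w : Fin (k+1) → Fin n => lw M (i :: List.ofFn w ++ [j]))
          (Finset.mem_univ _)
      · apply Finset.sup_le; intro w _
        set v : Fin k → Fin n := fun i => w i.castSucc with hv
        set m : Fin n := w (Fin.last k) with hm
        have hw : List.ofFn w = List.ofFn v ++ [m] := by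
          rw [List.ofFn_succ']; simp [List.concat_eq_append, hv, hm]
        have key : lw M (i :: List.ofFn w ++ [j]) = lw M (i :: List.ofFn v ++ [m]) + M m j := by
          rw [hw, show i :: (List.ofFn v ++ [m]) ++ [j] = (i :: List.ofFn v) ++ (m :: [j]) by simp,
            lw_append M (i :: List.ofFn v) m [j]]
          show lw M ((i :: List.ofFn v) ++ [m]) + (M m j + 0) = _
          rw [add_zero]
        rw [key]
        calc lw M (i :: List.ofFn v ++ [m]) + M m j
            ≤ tpow M (k+1) i m + M m j := by
              refine add_le_add_left ?_ _
              rw [ih m]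
              exact Finset.le_sup (f := fun v : Fin k → Fin n => lw M (i :: List.ofFn v ++ [m]))
                (Finset.mem_univ _)
          _ ≤ tSum (fun m' => tpow M (k+1) i m' + M m' j) :=
              le_tSum (fun m' => tpow M (k+1) i m' + M m' j) m

lemma exists_split {α : Type*} : ∀ (l : List α), ¬ l.Nodup →
    ∃ (a : α) (l₁ l₂ l₃ : List α), l = l₁ ++ a :: l₂ ++ a :: l₃ := by
  intro l
  induction l with
  | nil => intro hl; exact absurd List.nodup_nil hl
  | cons b t ih =>
      intro hnd
      by_cases hb : b ∈ t
      · obtain ⟨s, u, rfl⟩ := List.append_of_mem hb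
        exact ⟨b, [], s, u, rfl⟩
      · have ht : ¬ t.Nodup := fun hnd' => hnd (List.nodup_cons.mpr ⟨hb, hnd'⟩)
        obtain ⟨a, l₁, l₂, l₃, rfl⟩ := ih ht
        exact ⟨a, b :: l₁, l₂, l₃, rfl⟩

lemma getLast_congr {α : Type*} {l l' : List α} (h : l = l') (hl : l ≠ []) :
    l.getLast hl = l'.getLast (h ▸ hl) := by subst h; rfl

lemma tpow_le_kstar (M : Matrix (Fin n) (Fin n) T)
    (hTr : ∀ m, 1 ≤ m → m ≤ n → tTr (tpow M m) ≤ 0) :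
    ∀ k i j, tpow M k i j ≤ kstar M i j := by
  intro k
  induction k using Nat.strong_induction_on with
  | _ k IH =>
  intro i j
  rcases lt_or_ge k n with hk | hk
  · exact tpow_le_kstar_of_lt M hk i j
  have hn : 0 < n := i.pos
  obtain ⟨k', rfl⟩ : ∃ k', k = k' + 1 := ⟨k - 1, by omega⟩
  refine (tpow_succ_eq M k' i j).trans_le ?_
  apply Finset.sup_le; intro v _
  set L := i :: List.ofFn v ++ [j] with hL
  have hlen : L.length = k' + 2 := by simp [hL]
  have htk : (L.take (n+1)).length = n+1 := by
    rw [List.length_take]; omega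
  have hnodup : ¬ (L.take (n+1)).Nodup := by
    intro hnd
    have := hnd.length_le_card
    rw [htk, Fintype.card_fin] at this
    omega
  obtain ⟨a, l₁, l₂, l₃, hsplit⟩ := exists_split _ hnodup
  set rest := l₃ ++ L.drop (n+1) with hrest
  have hLdecomp : L = l₁ ++ a :: (l₂ ++ a :: rest) := by
    conv_lhs => rw [← List.take_append_drop (n+1) L]
    rw [hsplit]; simp [hrest]
  have hlens : l₁.length + l₂.length + 2 + l₃.length = n + 1 := by
    have := congrArg List.length hsplit
    rw [htk] at this
    simp at this
    omega
  have e1 : lw M L = lw M (l₁ ++ [a]) + lw M (a :: (l₂ ++ a :: rest)) := by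
    rw [hLdecomp]; exact lw_append M l₁ a (l₂ ++ a :: rest)
  have e2 : lw M (a :: (l₂ ++ a :: rest)) = lw M ((a :: l₂) ++ [a]) + lw M (a :: rest) :=
    lw_append M (a :: l₂) a rest
  have hcyc : lw M ((a :: l₂) ++ [a]) ≤ 0 := by
    have h1 := lw_le_tpow M (l₂ ++ [a]) a
    have h2 : (a :: (l₂ ++ [a])).getLast (List.cons_ne_nil _ _) = a := by
      have := List.getLast_append_right (l := a :: l₂) (l' := [a]) (List.cons_ne_nil a [])
      exact this
    rw [h2] at h1
    have h3 : (l₂ ++ [a]).length = l₂.length + 1 := by simp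
    rw [h3] at h1
    calc lw M ((a :: l₂) ++ [a]) = lw M (a :: (l₂ ++ [a])) := rfl
      _ ≤ tpow M (l₂.length + 1) a a := h1
      _ ≤ tTr (tpow M (l₂.length + 1)) :=
          le_tSum (fun c => tpow M (l₂.length + 1) c c) a
      _ ≤ 0 := hTr _ (by omega) (by omega)
  have e3 : lw M (l₁ ++ a :: rest) = lw M (l₁ ++ [a]) + lw M (a :: rest) :=
    lw_append M l₁ a rest
  have hle : lw M L ≤ lw M (l₁ ++ a :: rest) := by
    rw [e1, e2, e3]
    calc lw M (l₁ ++ [a]) + (lw M ((a :: l₂) ++ [a]) + lw M (a :: rest))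
        ≤ lw M (l₁ ++ [a]) + (0 + lw M (a :: rest)) :=
          add_le_add_right (add_le_add_left hcyc _) _
      _ = lw M (l₁ ++ [a]) + lw M (a :: rest) := by rw [zero_add]
  have hLne : L ≠ [] := by simp [hL]
  have hgetlastL : L.getLast hLne = j := by
    have := List.getLast_append_right (l := i :: List.ofFn v) (l' := [j]) (List.cons_ne_nil j [])
    exact this
  have h6 : L.getLast hLne = (a :: rest).getLast (List.cons_ne_nil a rest) := by
    have e : L = (l₁ ++ a :: l₂) ++ (a :: rest) := by rw [hLdecomp]; simp
    rw [getLast_congr e hLne]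
    exact List.getLast_append_right (l' := a :: rest) (List.cons_ne_nil a rest)
  have h8 : (a :: rest).getLast (List.cons_ne_nil a rest) = j := h6.symm.trans hgetlastL
  obtain ⟨c, t, hct, hci⟩ : ∃ c t, l₁ ++ a :: rest = c :: t ∧ c = i := by
    cases l₁ with
    | nil =>
        refine ⟨a, rest, rfl, ?_⟩
        have h9 : L = a :: (l₂ ++ a :: rest) := by simpa using hLdecomp
        rw [hL] at h9
        have hh := congrArg List.head? h9
        simp at hh
        exact hh.symm
    | cons c l₁' =>
        refine ⟨c, l₁' ++ a :: rest, rfl, ?_⟩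
        have h9 : L = c :: (l₁' ++ a :: (l₂ ++ a :: rest)) := by simpa using hLdecomp
        rw [hL] at h9
        have hh := congrArg List.head? h9
        simp at hh
        exact hh.symm
  have hgl : (c :: t).getLast (List.cons_ne_nil c t) = j :=
    (getLast_congr hct.symm (List.cons_ne_nil c t)).trans
      ((List.getLast_append_right (l := l₁) (l' := a :: rest) (List.cons_ne_nil a rest)).trans h8)
  have hsplice : lw M (l₁ ++ a :: rest) ≤ tpow M t.length i j := by
    rw [hct]
    calc lw M (c :: t) ≤ tpow M t.length c ((c :: t).getLast (List.cons_ne_nil c t)) :=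
          lw_le_tpow M t c
      _ = tpow M t.length i j := by rw [hgl, hci]
  have htlen : t.length < k' + 1 := by
    have h4 := congrArg List.length hLdecomp
    have h5 := congrArg List.length hct
    rw [hlen] at h4
    simp at h4 h5
    omega
  exact le_trans hle (le_trans hsplice (IH t.length htlen i j))

end Trop

namespace Trop

lemma tadd_max (a b c : T) : a + max b c = max (a + b) (a + c) := add_max a b c

lemma tmax_add (a b c : T) : max a b + c = max (a + c) (b + c) := by
  rw [add_comm, tadd_max, add_comm c a, add_comm c b]

lemma tconj_coe (r : ℝ) : tconj ((r : ℝ) : T) = ((-r : ℝ) : T) := WithBot.map_coe _ _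

lemma tconj_bot : tconj (⊥ : T) = ⊥ := rfl

lemma coe_add_le_coe_iff (r s : ℝ) (t : T) : (r : T) + t ≤ (s : T) ↔ t ≤ ((s - r : ℝ) : T) := by
  induction t using WithBot.recBotCoe with
  | bot => simp
  | coe a =>
      rw [← WithBot.coe_add, WithBot.coe_le_coe, WithBot.coe_le_coe]
      constructor <;> intro <;> linarith

lemma add_coe_le_coe_iff (r s : ℝ) (t : T) : t + (r : T) ≤ (s : T) ↔ t ≤ ((s - r : ℝ) : T) := by
  rw [add_comm]; exact coe_add_le_coe_iff r s t

lemma coe_mono {r s : ℝ} (h : r ≤ s) : ((r : ℝ) : T) ≤ ((s : ℝ) : T) := WithBot.coe_le_coe.mpr h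

section Main

variable {n : ℕ} (B : Matrix (Fin n) (Fin n) T) (p q : Fin n → T) (θ : T)

def Dmat : Matrix (Fin n) (Fin n) T := fun i j => tconj θ + (p i + tconj (q j))

def Amat : Matrix (Fin n) (Fin n) T := fun i j => max (B i j) (Dmat p q θ i j)

def Pvec (a : ℕ) : Fin n → T := tMulV (tpow B a) p

def Qvec (b : ℕ) : Fin n → T := vMulT (fun k => tconj (q k)) (tpow B b)

def DmatAB (a b : ℕ) : Matrix (Fin n) (Fin n) T :=
  fun i j => tconj θ + (Pvec B p a i + Qvec B q b j)

def SmSet (m : ℕ) : Finset (ℕ × ℕ) :=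
  (Finset.range m ×ˢ Finset.range m).filter (fun ab => ab.1 + ab.2 + 1 ≤ m)

lemma tMulV_tId (v : Fin n → T) (i : Fin n) : tMulV (tId n) v i = v i := by
  unfold tMulV tId
  rw [show (fun j => (if i = j then (0:T) else ⊥) + v j) = fun j => if j = i then v i else ⊥ by
    funext j; rcases eq_or_ne j i with rfl | hj
    · simp
    · simp [hj, Ne.symm hj, tbot_add], tSum_ite]

lemma vMulT_tId (v : Fin n → T) (j : Fin n) : vMulT v (tId n) j = v j := by
  unfold vMulT tId
  rw [show (fun i => v i + (if i = j then (0:T) else ⊥)) = fun i => if i = j then v j else ⊥ by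
    funext i; rcases eq_or_ne i j with rfl | hi
    · simp
    · simp [hi, tadd_bot], tSum_ite]

lemma Pvec_zero (i : Fin n) : Pvec B p 0 i = p i := tMulV_tId p i

lemma Qvec_zero (j : Fin n) : Qvec B q 0 j = tconj (q j) := vMulT_tId _ j

lemma Qvec_succ (b : ℕ) (j : Fin n) :
    Qvec B q (b + 1) j = tSum fun k => Qvec B q b k + B k j := by
  unfold Qvec
  exact vMulT_mulM _ (tpow B b) B j

lemma Dmat_eq_DmatAB (i j : Fin n) : Dmat p q θ i j = DmatAB B p q θ 0 0 i j := by
  unfold Dmat DmatAB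
  rw [Pvec_zero, Qvec_zero]

/-- q⁻ Bᵇ p -/
def qBp (b : ℕ) : T := tSum fun k => Qvec B q b k + p k

lemma vMv_expand (u : Fin n → T) (A : Matrix (Fin n) (Fin n) T) (v : Fin n → T) :
    vMv u A v = tSum (fun j => vMulT u A j + v j) := by
  unfold vMv vMulT
  calc tSum (fun i => u i + tSum fun j => A i j + v j)
      = tSum (fun i => tSum fun j => u i + (A i j + v j)) := by
        congr 1; funext i; rw [const_add_tSum]
    _ = tSum (fun j => tSum fun i => u i + (A i j + v j)) := tSum_comm _
    _ = tSum (fun j => tSum fun i => (u i + A i j) + v j) := by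
        congr 1; funext j; congr 1; funext i; rw [add_assoc]
    _ = tSum (fun j => (tSum fun i => u i + A i j) + v j) := by
        congr 1; funext j; rw [tSum_add_const]

lemma qBp_eq_vMv (b : ℕ) : qBp B p q b = vMv (fun l => tconj (q l)) (tpow B b) p := by
  rw [vMv_expand]; rfl

lemma qBp_le_theta (hθ2 : vMv (fun l => tconj (q l)) (kstar B) p ≤ θ) {b : ℕ} (hb : b < n) :
    qBp B p q b ≤ θ := by
  refine le_trans ?_ hθ2
  rw [qBp_eq_vMv, vMv_expand, vMv_expand]
  refine tSum_mono fun j => add_le_add_left ?_ _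
  unfold vMulT
  refine tSum_mono fun i => add_le_add_right ?_ _
  exact tpow_le_kstar_of_lt B hb i j

lemma PQsum_eq_qBp (a b : ℕ) :
    tSum (fun k => Qvec B q b k + Pvec B p a k) = qBp B p q (b + a) := by
  unfold Pvec tMulV qBp
  calc tSum (fun k => Qvec B q b k + tSum fun l => tpow B a k l + p l)
      = tSum (fun k => tSum fun l => Qvec B q b k + (tpow B a k l + p l)) := by
        congr 1; funext k; rw [const_add_tSum]
    _ = tSum (fun l => tSum fun k => Qvec B q b k + (tpow B a k l + p l)) := tSum_comm _
    _ = tSum (fun l => tSum fun k => (Qvec B q b k + tpow B a k l) + p l) := by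
        congr 1; funext l; congr 1; funext k; rw [add_assoc]
    _ = tSum (fun l => (tSum fun k => Qvec B q b k + tpow B a k l) + p l) := by
        congr 1; funext l; rw [tSum_add_const]
    _ = tSum (fun l => Qvec B q (b + a) l + p l) := by
        congr 1; funext l
        congr 1
        have h1 : Qvec B q (b + a) l = vMulT (Qvec B q b) (tpow B a) l := by
          unfold Qvec
          rw [show vMulT (fun k => tconj (q k)) (tpow B (b + a)) l
              = vMulT (fun k => tconj (q k)) (tMulM (tpow B b) (tpow B a)) l by
            unfold vMulT; congr 1; funext i; rw [tpow_add],
            vMulT_mulM]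
        rw [h1]; rfl

end Main
end Trop

namespace Trop
section Main2

variable {n : ℕ} (B : Matrix (Fin n) (Fin n) T) (p q : Fin n → T) (θ : T)

lemma Gterm_eq (a b : ℕ) (i j : Fin n) :
    tMulM (tMulM (tpow B a) (pqm p q)) (tpow B b) i j = Pvec B p a i + Qvec B q b j := by
  have h1 : ∀ k, tMulM (tpow B a) (pqm p q) i k = Pvec B p a i + tconj (q k) := by
    intro k
    unfold tMulM pqm Pvec tMulV
    calc tSum (fun l => tpow B a i l + (p l + tconj (q k)))
        = tSum (fun l => (tpow B a i l + p l) + tconj (q k)) := by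
          congr 1; funext l; rw [add_assoc]
      _ = _ := tSum_add_const _ _
  unfold tMulM
  calc tSum (fun k => tMulM (tpow B a) (pqm p q) i k + tpow B b k j)
      = tSum (fun k => Pvec B p a i + (tconj (q k) + tpow B b k j)) := by
        congr 1; funext k; rw [h1 k, add_assoc]
    _ = Pvec B p a i + tSum (fun k => tconj (q k) + tpow B b k j) := const_add_tSum _ _
    _ = _ := rfl

lemma DmatAB_eq (a b : ℕ) (i j : Fin n) :
    DmatAB B p q θ a b i j = tMulM (tMulM (tpow B a) (Dmat p q θ)) (tpow B b) i j := by
  have h1 : ∀ k, tMulM (tpow B a) (Dmat p q θ) i k = tconj θ + (Pvec B p a i + tconj (q k)) := by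
    intro k
    unfold tMulM Dmat Pvec tMulV
    calc tSum (fun l => tpow B a i l + (tconj θ + (p l + tconj (q k))))
        = tSum (fun l => tconj θ + ((tpow B a i l + p l) + tconj (q k))) := by
          congr 1; funext l; abel
      _ = tconj θ + tSum (fun l => (tpow B a i l + p l) + tconj (q k)) := const_add_tSum _ _
      _ = tconj θ + (tSum (fun l => tpow B a i l + p l) + tconj (q k)) := by
          rw [tSum_add_const]
      _ = _ := rfl
  calc DmatAB B p q θ a b i j
      = (tconj θ + Pvec B p a i) + Qvec B q b j := by
        unfold DmatAB; rw [add_assoc]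
    _ = tSum (fun k => (tconj θ + Pvec B p a i) + (tconj (q k) + tpow B b k j)) :=
        (const_add_tSum _ _).symm
    _ = tSum (fun k => (tconj θ + (Pvec B p a i + tconj (q k))) + tpow B b k j) := by
        congr 1; funext k; abel
    _ = tSum (fun k => tMulM (tpow B a) (Dmat p q θ) i k + tpow B b k j) := by
        congr 1; funext k; rw [h1 k]

set_option maxHeartbeats 2000000 in
lemma claimC (hθ2 : vMv (fun l => tconj (q l)) (kstar B) p ≤ θ) :
    ∀ m, 1 ≤ m → m ≤ n → ∀ i j, tpow (Amat B p q θ) m i j ≤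
      max (tpow B m i j) ((SmSet m).sup fun ab => DmatAB B p q θ ab.1 ab.2 i j) := by
  intro m
  induction m with
  | zero => intro h; omega
  | succ m ih =>
    intro _ hmn i j
    rcases Nat.eq_zero_or_pos m with rfl | hm
    · -- base case m+1 = 1
      have e1 : tpow (Amat B p q θ) (0+1) i j = Amat B p q θ i j := tpow_one _ i j
      have e2 : tpow B (0+1) i j = B i j := tpow_one B i j
      rw [e1, e2]
      have h00 : ((0,0) : ℕ × ℕ) ∈ SmSet (0+1) := by simp [SmSet]
      show max (B i j) (Dmat p q θ i j) ≤ _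
      refine max_le_max le_rfl ?_
      rw [Dmat_eq_DmatAB]
      exact Finset.le_sup (f := fun ab : ℕ × ℕ => DmatAB B p q θ ab.1 ab.2 i j) h00
    · -- inductive step
      show tSum (fun k => tpow (Amat B p q θ) m i k + Amat B p q θ k j) ≤ _
      refine tSum_le fun k => ?_
      have hA : Amat B p q θ k j = max (B k j) (Dmat p q θ k j) := rfl
      have step1 : tpow (Amat B p q θ) m i k + Amat B p q θ k j ≤
          max (tpow B m i k) ((SmSet m).sup fun ab => DmatAB B p q θ ab.1 ab.2 i k)
            + Amat B p q θ k j :=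
        add_le_add_left (ih hm (by omega) i k) _
      refine le_trans step1 ?_
      rw [tmax_add, hA, tadd_max, tadd_max]
      have c1 : tpow B m i k + B k j ≤ tpow B (m+1) i j :=
        le_tSum (fun k => tpow B m i k + B k j) k
      have c2 : tpow B m i k + Dmat p q θ k j ≤
          (SmSet (m+1)).sup fun ab => DmatAB B p q θ ab.1 ab.2 i j := by
        have he : tpow B m i k + Dmat p q θ k j
            = tconj θ + ((tpow B m i k + p k) + tconj (q j)) := by
          unfold Dmat; abel
        have hb : tconj θ + ((tpow B m i k + p k) + tconj (q j)) ≤ DmatAB B p q θ m 0 i j := by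
          unfold DmatAB
          rw [Qvec_zero]
          refine add_le_add_right (add_le_add_left ?_ _) _
          exact le_tSum (fun l => tpow B m i l + p l) k
        rw [he]
        refine le_trans hb ?_
        refine Finset.le_sup (f := fun ab : ℕ × ℕ => DmatAB B p q θ ab.1 ab.2 i j)
          (b := (m, 0)) ?_
        simp [SmSet] <;> omega
      have c3 : ((SmSet m).sup fun ab => DmatAB B p q θ ab.1 ab.2 i k) + B k j ≤
          (SmSet (m+1)).sup fun ab => DmatAB B p q θ ab.1 ab.2 i j := by
        rw [finsup_add]
        refine Finset.sup_le fun ab hab => ?_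
        have hmem : ab ∈ SmSet m := hab
        simp only [SmSet, Finset.mem_filter, Finset.mem_product, Finset.mem_range] at hmem
        have he : DmatAB B p q θ ab.1 ab.2 i k + B k j
            = tconj θ + (Pvec B p ab.1 i + (Qvec B q ab.2 k + B k j)) := by
          unfold DmatAB; abel
        rw [he]
        have hb : tconj θ + (Pvec B p ab.1 i + (Qvec B q ab.2 k + B k j))
            ≤ DmatAB B p q θ ab.1 (ab.2 + 1) i j := by
          unfold DmatAB
          refine add_le_add_right (add_le_add_right ?_ _) _
          rw [Qvec_succ]
          exact le_tSum (fun k => Qvec B q ab.2 k + B k j) k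
        refine le_trans hb ?_
        refine Finset.le_sup (f := fun ab : ℕ × ℕ => DmatAB B p q θ ab.1 ab.2 i j)
          (b := (ab.1, ab.2 + 1)) ?_
        simp [SmSet] <;> omega
      have c4 : ((SmSet m).sup fun ab => DmatAB B p q θ ab.1 ab.2 i k) + Dmat p q θ k j ≤
          (SmSet (m+1)).sup fun ab => DmatAB B p q θ ab.1 ab.2 i j := by
        rw [finsup_add]
        refine Finset.sup_le fun ab hab => ?_
        have hmem : ab ∈ SmSet m := hab
        simp only [SmSet, Finset.mem_filter, Finset.mem_product, Finset.mem_range] at hmem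
        have he : DmatAB B p q θ ab.1 ab.2 i k + Dmat p q θ k j
            = (tconj θ + (Pvec B p ab.1 i + tconj (q j))) + (tconj θ + (Qvec B q ab.2 k + p k)) := by
          unfold DmatAB Dmat; abel
        rw [he]
        have hq1 : Qvec B q ab.2 k + p k ≤ θ := by
          refine le_trans (le_tSum (fun k => Qvec B q ab.2 k + p k) k) ?_
          exact qBp_le_theta B p q θ hθ2 (by omega)
        have hz : tconj θ + (Qvec B q ab.2 k + p k) ≤ 0 := by
          refine le_trans (add_le_add_right hq1 _) ?_
          induction θ using WithBot.recBotCoe with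
          | bot => simp [tconj_bot, tbot_add]
          | coe r => rw [tconj_coe, ← WithBot.coe_add]; simp
        have hb : (tconj θ + (Pvec B p ab.1 i + tconj (q j))) + (tconj θ + (Qvec B q ab.2 k + p k))
            ≤ DmatAB B p q θ ab.1 0 i j := by
          refine le_trans (add_le_add_right hz _) ?_
          rw [add_zero]
          unfold DmatAB
          rw [Qvec_zero]
        refine le_trans hb ?_
        refine Finset.le_sup (f := fun ab : ℕ × ℕ => DmatAB B p q θ ab.1 ab.2 i j)
          (b := (ab.1, 0)) ?_
        simp [SmSet] <;> omega
      have goal1 : max (tpow B m i k + B k j) (tpow B m i k + Dmat p q θ k j) ≤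
          max (tpow B (m+1) i j) ((SmSet (m+1)).sup fun ab => DmatAB B p q θ ab.1 ab.2 i j) :=
        max_le (le_trans c1 (le_max_left _ _)) (le_trans c2 (le_max_right _ _))
      have goal2 : max (((SmSet m).sup fun ab => DmatAB B p q θ ab.1 ab.2 i k) + B k j)
          (((SmSet m).sup fun ab => DmatAB B p q θ ab.1 ab.2 i k) + Dmat p q θ k j) ≤
          max (tpow B (m+1) i j) ((SmSet (m+1)).sup fun ab => DmatAB B p q θ ab.1 ab.2 i j) :=
        max_le (le_trans c3 (le_max_right _ _)) (le_trans c4 (le_max_right _ _))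
      exact max_le goal1 goal2

end Main2
end Trop

namespace Trop
section Main3

variable {n : ℕ} (B : Matrix (Fin n) (Fin n) T) (p q : Fin n → T) (θ : T)

lemma tconj_add_self (hθbot : θ ≠ ⊥) : tconj θ + θ = 0 := by
  induction θ using WithBot.recBotCoe with
  | bot => exact absurd rfl hθbot
  | coe r => rw [tconj_coe, ← WithBot.coe_add]; norm_num

lemma TrA (hTr : TrB B ≤ 0) (hθ2 : vMv (fun l => tconj (q l)) (kstar B) p ≤ θ)
    (hθbot : θ ≠ ⊥) :
    ∀ m, 1 ≤ m → m ≤ n → tTr (tpow (Amat B p q θ) m) ≤ 0 := by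
  intro m h1 h2
  refine tSum_le fun i => ?_
  refine le_trans (claimC B p q θ hθ2 m h1 h2 i i) (max_le ?_ ?_)
  · have hm : m - 1 + 1 = m := by omega
    calc tpow B m i i ≤ tTr (tpow B m) := le_tSum (fun c => tpow B m c c) i
      _ ≤ TrB B := by
          have := le_tSum (fun k : Fin n => tTr (tpow B ((k : ℕ) + 1))) ⟨m - 1, by omega⟩
          simpa [hm, TrB] using this
      _ ≤ 0 := hTr
  · refine Finset.sup_le fun ab hab => ?_
    have hmem : ab ∈ SmSet m := hab
    simp only [SmSet, Finset.mem_filter, Finset.mem_product, Finset.mem_range] at hmem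
    have h3 : DmatAB B p q θ ab.1 ab.2 i i
        = tconj θ + (Qvec B q ab.2 i + Pvec B p ab.1 i) := by
      unfold DmatAB; abel
    rw [h3]
    have h4 : Qvec B q ab.2 i + Pvec B p ab.1 i ≤ qBp B p q (ab.2 + ab.1) := by
      rw [← PQsum_eq_qBp]
      exact le_tSum (fun k => Qvec B q ab.2 k + Pvec B p ab.1 k) i
    have h5 : qBp B p q (ab.2 + ab.1) ≤ θ := qBp_le_theta B p q θ hθ2 (by omega)
    calc tconj θ + (Qvec B q ab.2 i + Pvec B p ab.1 i)
        ≤ tconj θ + θ := add_le_add_right (le_trans h4 h5) _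
      _ = 0 := tconj_add_self θ hθbot

/-- The matrix G of the theorem. -/
def Gmat (g : Fin n → T) : Matrix (Fin n) (Fin n) T := fun a b => max
      ((pairSet n).sup fun ij =>
        tconj θ + tMulM (tMulM (tpow B ij.1) (pqm p q)) (tpow B ij.2) a b)
      (kstar B a b)

lemma Gterm_eq_DmatAB (a b : ℕ) (i j : Fin n) :
    tconj θ + tMulM (tMulM (tpow B a) (pqm p q)) (tpow B b) i j = DmatAB B p q θ a b i j := by
  rw [Gterm_eq]; rfl

lemma G_eq_kstarA (g : Fin n → T) (hn : 0 < n)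
    (hθ2 : vMv (fun l => tconj (q l)) (kstar B) p ≤ θ) (i j : Fin n) :
    Gmat B p q θ g i j = kstar (Amat B p q θ) i j := by
  apply le_antisymm
  · refine max_le ?_ ?_
    · refine Finset.sup_le fun ab hab => ?_
      have hmem : ab ∈ pairSet n := hab
      simp only [pairSet, Finset.mem_filter, Finset.mem_product, Finset.mem_range] at hmem
      rw [Gterm_eq_DmatAB, DmatAB_eq]
      have step1 : tMulM (tMulM (tpow B ab.1) (Dmat p q θ)) (tpow B ab.2) i j
          ≤ tMulM (tMulM (tpow (Amat B p q θ) ab.1) (Amat B p q θ)) (tpow (Amat B p q θ) ab.2) i j := by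
        refine tMulM_mono (fun i' j' => ?_)
          (fun i' j' => tpow_mono (fun a b => le_max_left _ _) ab.2 i' j') i j
        exact tMulM_mono (fun a b => tpow_mono (fun _ _ => le_max_left _ _) ab.1 a b)
          (fun a b => le_max_right _ _) i' j'
      refine le_trans step1 ?_
      have step2 : tMulM (tMulM (tpow (Amat B p q θ) ab.1) (Amat B p q θ))
          (tpow (Amat B p q θ) ab.2) i j = tpow (Amat B p q θ) (ab.1 + 1 + ab.2) i j := by
        show tMulM (tpow (Amat B p q θ) (ab.1 + 1)) (tpow (Amat B p q θ) ab.2) i j = _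
        exact (tpow_add _ (ab.1 + 1) ab.2 i j).symm
      rw [step2]
      exact tpow_le_kstar_of_lt _ (by omega) i j
    · exact tSum_mono fun k => tpow_mono (fun i j => le_max_left _ _) (k : ℕ) i j
  · refine tSum_le fun k => ?_
    rcases Nat.eq_zero_or_pos (k : ℕ) with hk0 | hkpos
    · rw [hk0]
      refine le_trans (le_of_eq rfl) (le_trans (tpow_le_kstar_of_lt B hn i j) ?_)
      exact le_max_right _ _
    · have hkn : (k : ℕ) ≤ n := le_of_lt k.isLt
      refine le_trans (claimC B p q θ hθ2 (k : ℕ) hkpos hkn i j) (max_le ?_ ?_)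
      · exact le_trans (tpow_le_kstar_of_lt B k.isLt i j) (le_max_right _ _)
      · refine le_trans ?_ (le_max_left _ _)
        refine Finset.sup_le fun ab hab => ?_
        have hmem : ab ∈ SmSet (k : ℕ) := hab
        simp only [SmSet, Finset.mem_filter, Finset.mem_product, Finset.mem_range] at hmem
        rw [← Gterm_eq_DmatAB]
        refine Finset.le_sup (f := fun ij : ℕ × ℕ =>
          tconj θ + tMulM (tMulM (tpow B ij.1) (pqm p q)) (tpow B ij.2) i j)
          (b := ab) ?_
        have : (k : ℕ) < n := k.isLt
        simp only [pairSet, Finset.mem_filter, Finset.mem_product, Finset.mem_range]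
        omega

lemma AG_le_G (g : Fin n → T) (hn : 0 < n) (hTr : TrB B ≤ 0)
    (hθ2 : vMv (fun l => tconj (q l)) (kstar B) p ≤ θ) (hθbot : θ ≠ ⊥) (i j : Fin n) :
    tMulM (Amat B p q θ) (Gmat B p q θ g) i j ≤ Gmat B p q θ g i j := by
  have hG : ∀ a b, Gmat B p q θ g a b = kstar (Amat B p q θ) a b := fun a b =>
    G_eq_kstarA B p q θ g hn hθ2 a b
  rw [hG]
  have e : tMulM (Amat B p q θ) (Gmat B p q θ g) i j
      = tMulM (Amat B p q θ) (kstar (Amat B p q θ)) i j := by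
    unfold tMulM; congr 1; funext k; rw [hG]
  rw [e]
  set A := Amat B p q θ
  show tSum (fun k => A i k + tSum fun l : Fin n => tpow A (l : ℕ) k j) ≤ _
  refine tSum_le fun k => ?_
  rw [← const_add_tSum]
  refine tSum_le fun l => ?_
  calc A i k + tpow A (l : ℕ) k j
      ≤ tSum (fun k' => A i k' + tpow A (l : ℕ) k' j) :=
        le_tSum (fun k' => A i k' + tpow A (l : ℕ) k' j) k
    _ = tpow A ((l : ℕ) + 1) i j := (tpow_succ_left A (l : ℕ) i j).symm
    _ ≤ kstar A i j := tpow_le_kstar A (TrA B p q θ hTr hθ2 hθbot) _ i j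

lemma lower_bound (g : Fin n → T) (h : Fin n → ℝ)
    (hθdef : θ = max
      ((pairSet n).sup fun ij =>
        vMv (fun l => ((-(h l) : ℝ) : T)) (tpow B ij.1) p +
          vMv (fun l => tconj (q l)) (tpow B ij.2) g)
      (vMv (fun l => tconj (q l)) (kstar B) p))
    (x : Fin n → ℝ)
    (hBx : ∀ i, tSum (fun j => B i j + ((x j : ℝ) : T)) ≤ ((x i : ℝ) : T))
    (hg : ∀ i, g i ≤ ((x i : ℝ) : T)) (hh : ∀ i, ((x i : ℝ) : T) ≤ ((h i : ℝ) : T)) :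
    θ ≤ tSum (fun i => tSum fun j =>
      ((-(x i) : ℝ) : T) + p i + tconj (q j) + ((x j : ℝ) : T)) := by
  set xb : Fin n → T := fun l => ((x l : ℝ) : T) with hxb
  have hBx' : ∀ i, tMulV B xb i ≤ xb i := hBx
  have hpow : ∀ k i, tMulV (tpow B k) xb i ≤ xb i := fun k i => tMulV_tpow_le hBx' k i
  have hentry : ∀ (k : ℕ) (l m' : Fin n), tpow B k l m' ≤ ((x l - x m' : ℝ) : T) := by
    intro k l m'
    have h1 : tpow B k l m' + xb m' ≤ xb l :=
      le_trans (le_tSum (fun m'' => tpow B k l m'' + xb m'') m') (hpow k l)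
    exact (add_coe_le_coe_iff _ _ _).mp h1
  set X1 : T := tSum (fun m' => ((-(x m') : ℝ) : T) + p m') with hX1
  set X2 : T := tSum (fun l => tconj (q l) + xb l) with hX2
  have hV : tSum (fun i => tSum fun j =>
      ((-(x i) : ℝ) : T) + p i + tconj (q j) + ((x j : ℝ) : T)) = X1 + X2 := by
    calc tSum (fun i => tSum fun j => ((-(x i) : ℝ) : T) + p i + tconj (q j) + ((x j : ℝ) : T))
        = tSum (fun i => tSum fun j =>
            (((-(x i) : ℝ) : T) + p i) + (tconj (q j) + xb j)) := by
          congr 1; funext i; congr 1; funext j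
          show _ = (((-(x i) : ℝ) : T) + p i) + (tconj (q j) + ((x j : ℝ) : T))
          abel
      _ = tSum (fun i => (((-(x i) : ℝ) : T) + p i) + X2) := by
          congr 1; funext i; rw [const_add_tSum]
      _ = X1 + X2 := tSum_add_const _ _
  have S1 : ∀ a : ℕ, vMv (fun l => ((-(h l) : ℝ) : T)) (tpow B a) p ≤ X1 := by
    intro a
    refine tSum_le fun l => ?_
    rw [← const_add_tSum]
    refine tSum_le fun m' => ?_
    have hhl : (-(h l) : ℝ) ≤ -(x l) := neg_le_neg (WithBot.coe_le_coe.mp (hh l))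
    calc ((-(h l) : ℝ) : T) + (tpow B a l m' + p m')
        ≤ ((-(x l) : ℝ) : T) + (tpow B a l m' + p m') :=
          add_le_add_left (coe_mono hhl) _
      _ ≤ ((-(x l) : ℝ) : T) + (((x l - x m' : ℝ) : T) + p m') :=
          add_le_add_right (add_le_add_left (hentry a l m') _) _
      _ = (((-(x l) : ℝ) : T) + ((x l - x m' : ℝ) : T)) + p m' := (add_assoc _ _ _).symm
      _ = ((-(x m') : ℝ) : T) + p m' := by
          rw [← WithBot.coe_add]
          congr 1
          · congr 1; ring
      _ ≤ X1 := le_tSum (fun m'' => ((-(x m'') : ℝ) : T) + p m'') m'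
  have S2 : ∀ b : ℕ, vMv (fun l => tconj (q l)) (tpow B b) g ≤ X2 := by
    intro b
    refine tSum_le fun l => ?_
    have hin : tSum (fun m' => tpow B b l m' + g m') ≤ xb l := by
      refine tSum_le fun m' => ?_
      calc tpow B b l m' + g m' ≤ tpow B b l m' + xb m' := add_le_add_right (hg m') _
        _ ≤ tSum (fun m'' => tpow B b l m'' + xb m'') :=
            le_tSum (fun m'' => tpow B b l m'' + xb m'') m'
        _ ≤ xb l := hpow b l
    calc tconj (q l) + tSum (fun m' => tpow B b l m' + g m')
        ≤ tconj (q l) + xb l := add_le_add_right hin _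
      _ ≤ X2 := le_tSum (fun l' => tconj (q l') + xb l') l
  have SB : vMv (fun l => tconj (q l)) (kstar B) p ≤ X1 + X2 := by
    refine tSum_le fun l => ?_
    rw [← const_add_tSum]
    refine tSum_le fun m' => ?_
    have hks : kstar B l m' + p m' = tSum (fun k : Fin n => tpow B (k : ℕ) l m' + p m') :=
      (tSum_add_const (fun k : Fin n => tpow B (k : ℕ) l m') (p m')).symm
    rw [show tconj (q l) + (kstar B l m' + p m')
        = tconj (q l) + tSum (fun k : Fin n => tpow B (k : ℕ) l m' + p m') by rw [hks],
      ← const_add_tSum]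
    refine tSum_le fun k => ?_
    have hsplit : ((x l - x m' : ℝ) : T) = ((x l : ℝ) : T) + ((-(x m') : ℝ) : T) := by
      rw [← WithBot.coe_add, sub_eq_add_neg]
    calc tconj (q l) + (tpow B (k : ℕ) l m' + p m')
        ≤ tconj (q l) + (((x l - x m' : ℝ) : T) + p m') :=
          add_le_add_right (add_le_add_left (hentry (k : ℕ) l m') _) _
      _ = (tconj (q l) + xb l) + (((-(x m') : ℝ) : T) + p m') := by
          rw [hsplit]; show _ = tconj (q l) + ((x l : ℝ) : T) + (((-(x m') : ℝ) : T) + p m')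
          abel
      _ ≤ X2 + X1 := add_le_add (le_tSum (fun l' => tconj (q l') + xb l') l)
          (le_tSum (fun m'' => ((-(x m'') : ℝ) : T) + p m'') m')
      _ = X1 + X2 := add_comm _ _
  rw [hV, hθdef]
  refine max_le ?_ SB
  refine Finset.sup_le fun ab _ => ?_
  exact add_le_add (S1 ab.1) (S2 ab.2)

end Main3
end Trop

namespace Trop
section Main4

variable {n : ℕ} (B : Matrix (Fin n) (Fin n) T) (p q : Fin n → T) (θ : T)

lemma sum_sup_add {ι : Type*} (s : Finset ι) (F : ι → Fin n → T) (v : Fin n → T) :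
    tSum (fun j => (s.sup fun a => F a j) + v j) = s.sup fun a => tSum (fun j => F a j + v j) := by
  calc tSum (fun j => (s.sup fun a => F a j) + v j)
      = tSum (fun j => s.sup fun a => F a j + v j) := by
        congr 1; funext j; rw [finsup_add]
    _ = _ := Finset.sup_comm Finset.univ s _

lemma Gmat_mulV_le (g : Fin n → T) (v : Fin n → T)
    (hBv : ∀ i, tMulV B v i ≤ v i) (hDv : ∀ i, tMulV (Dmat p q θ) v i ≤ v i) (i : Fin n) :
    tMulV (Gmat B p q θ g) v i ≤ v i := by
  have hpow : ∀ k i, tMulV (tpow B k) v i ≤ v i := fun k => tMulV_tpow_le hBv k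
  show tSum (fun j => Gmat B p q θ g i j + v j) ≤ v i
  have e1 : (fun j => Gmat B p q θ g i j + v j)
      = fun j => max (((pairSet n).sup fun ij => DmatAB B p q θ ij.1 ij.2 i j) + v j)
          (kstar B i j + v j) := by
    funext j
    unfold Gmat
    rw [show ((pairSet n).sup fun ij =>
          tconj θ + tMulM (tMulM (tpow B ij.1) (pqm p q)) (tpow B ij.2) i j)
        = (pairSet n).sup fun ij => DmatAB B p q θ ij.1 ij.2 i j from
      Finset.sup_congr rfl fun ij _ => Gterm_eq_DmatAB B p q θ ij.1 ij.2 i j]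
    rw [tmax_add]
  rw [e1, tSum_max]
  refine max_le ?_ ?_
  · rw [sum_sup_add]
    refine Finset.sup_le fun ab _ => ?_
    have e2 : tSum (fun j => DmatAB B p q θ ab.1 ab.2 i j + v j)
        = tMulV (tMulM (tMulM (tpow B ab.1) (Dmat p q θ)) (tpow B ab.2)) v i := by
      unfold tMulV; congr 1; funext j; rw [DmatAB_eq]
    rw [e2, tMulV_mulM, tMulV_mulM]
    calc tMulV (tpow B ab.1) (tMulV (Dmat p q θ) (tMulV (tpow B ab.2) v)) i
        ≤ tMulV (tpow B ab.1) (tMulV (Dmat p q θ) v) i :=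
          tMulV_mono_v _ (fun j => tMulV_mono_v _ (fun k => hpow ab.2 k) j) i
      _ ≤ tMulV (tpow B ab.1) v i := tMulV_mono_v _ (fun j => hDv j) i
      _ ≤ v i := hpow ab.1 i
  · have e3 : tSum (fun j => kstar B i j + v j)
        = (Finset.univ : Finset (Fin n)).sup fun k => tSum (fun j => tpow B (k : ℕ) i j + v j) :=
      sum_sup_add Finset.univ (fun k : Fin n => fun j => tpow B (k : ℕ) i j) v
    rw [e3]
    exact Finset.sup_le fun k _ => hpow (k : ℕ) i

lemma Gmat_diag_nonneg (g : Fin n → T) (hn : 0 < n) (i : Fin n) :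
    (0 : T) ≤ Gmat B p q θ g i i := by
  refine le_trans ?_ (le_max_right _ _)
  have h0 : tpow B 0 i i = (0 : T) := by simp [tpow, tId]
  rw [← h0]
  exact tpow_le_kstar_of_lt B hn i i

end Main4
end Trop

open Trop in
/-- Attainment and completeness for the rank-one tropical optimization problem:
a regular x is feasible and attains the minimum θ iff x = G u for some nonzero u
with g ≤ u ≤ (h⁻G)⁻, where G = ⊕_{0≤i+j≤n−2} θ⁻¹ B^i p q⁻ B^j ⊕ B*. -/
theorem tropical_rank_one_optimization_solutions {n : ℕ}
    (B : Matrix (Fin n) (Fin n) T) (p q : Fin n → T) (g : Fin n → T) (h : Fin n → ℝ)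
    (hTr : TrB B ≤ 0)
    (hfeas : vMv (fun l => ((-(h l) : ℝ) : T)) (kstar B) g ≤ 0)
    (hp : ∃ i, p i ≠ ⊥) (hq : ∃ i, q i ≠ ⊥)
    (hqp : tSum (fun i => tconj (q i) + p i) ≠ ⊥)
    (θ : T)
    (hθdef : θ = max
      ((pairSet n).sup fun ij =>
        vMv (fun l => ((-(h l) : ℝ) : T)) (tpow B ij.1) p +
          vMv (fun l => tconj (q l)) (tpow B ij.2) g)
      (vMv (fun l => tconj (q l)) (kstar B) p))
    (G : Matrix (Fin n) (Fin n) T)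
    (hGdef : G = fun a b => max
      ((pairSet n).sup fun ij =>
        tconj θ + tMulM (tMulM (tpow B ij.1) (pqm p q)) (tpow B ij.2) a b)
      (kstar B a b))
    (x : Fin n → ℝ) :
    ((∀ i, tSum (fun j => B i j + (x j : T)) ≤ (x i : T)) ∧
      (∀ i, g i ≤ (x i : T)) ∧ (∀ i, (x i : T) ≤ (h i : T)) ∧
      (tSum fun i => tSum fun j =>
        ((-(x i) : ℝ) : T) + p i + tconj (q j) + (x j : T)) = θ) ↔
      ∃ u : Fin n → T, (∃ i, u i ≠ ⊥) ∧
        (∀ i, g i ≤ u i) ∧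
        (∀ i, u i ≤ tconj (tSum fun a => ((-(h a) : ℝ) : T) + G a i)) ∧
        (∀ i, (x i : T) = tSum fun j => G i j + u j) := by
  obtain ⟨i0, hp0⟩ := hp
  have hn : 0 < n := i0.pos
  have hG : G = Trop.Gmat B p q θ g := hGdef
  subst hG
  set xb : Fin n → T := fun l => ((x l : ℝ) : T) with hxbdef
  have hθ2 : vMv (fun l => tconj (q l)) (kstar B) p ≤ θ := by
    rw [hθdef]; exact le_max_right _ _
  have hθbot : θ ≠ ⊥ := by
    intro hbot
    apply hqp
    have hks0 : ∀ i : Fin n, (0 : T) ≤ kstar B i i := by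
      intro i
      have h0 : tpow B 0 i i = (0 : T) := by simp [tpow, tId]
      rw [← h0]
      exact tpow_le_kstar_of_lt B hn i i
    have h1 : tSum (fun i => tconj (q i) + p i) ≤ vMv (fun l => tconj (q l)) (kstar B) p := by
      refine tSum_mono fun i => add_le_add_right ?_ _
      calc p i = 0 + p i := (zero_add _).symm
        _ ≤ kstar B i i + p i := add_le_add_left (hks0 i) _
        _ ≤ tSum (fun j => kstar B i j + p j) := le_tSum (fun j => kstar B i j + p j) i
    have h2 := le_trans h1 hθ2
    rw [hbot] at h2
    exact le_bot_iff.mp h2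
  obtain ⟨θr, hθr⟩ : ∃ r : ℝ, θ = (r : T) := by
    obtain ⟨r, hr⟩ := WithBot.ne_bot_iff_exists.mp hθbot
    exact ⟨r, hr.symm⟩
  have hGii : ∀ i, (0 : T) ≤ Trop.Gmat B p q θ g i i := Gmat_diag_nonneg B p q θ g hn
  constructor
  · rintro ⟨hBx, hg, hh, hVeq⟩
    have hBx' : ∀ i, tMulV B xb i ≤ xb i := hBx
    have hDx : ∀ i, tMulV (Dmat p q θ) xb i ≤ xb i := by
      intro i
      refine tSum_le fun j => ?_
      have hterm : ((-(x i) : ℝ) : T) + p i + tconj (q j) + ((x j : ℝ) : T) ≤ θ := by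
        calc ((-(x i) : ℝ) : T) + p i + tconj (q j) + ((x j : ℝ) : T)
            ≤ tSum (fun j' => ((-(x i) : ℝ) : T) + p i + tconj (q j') + ((x j' : ℝ) : T)) :=
              le_tSum (fun j' => ((-(x i) : ℝ) : T) + p i + tconj (q j') + ((x j' : ℝ) : T)) j
          _ ≤ tSum (fun i' => tSum fun j' =>
                ((-(x i') : ℝ) : T) + p i' + tconj (q j') + ((x j' : ℝ) : T)) :=
              le_tSum (fun i' => tSum fun j' =>
                ((-(x i') : ℝ) : T) + p i' + tconj (q j') + ((x j' : ℝ) : T)) i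
          _ = θ := hVeq
      have he2 : ((-(x i) : ℝ) : T) + p i + tconj (q j) + ((x j : ℝ) : T)
          = ((-(x i) : ℝ) : T) + ((p i + tconj (q j)) + ((x j : ℝ) : T)) := by abel
      rw [he2, hθr, coe_add_le_coe_iff] at hterm
      show Dmat p q θ i j + xb j ≤ xb i
      have he : Dmat p q θ i j + xb j
          = ((-θr : ℝ) : T) + ((p i + tconj (q j)) + ((x j : ℝ) : T)) := by
        show (tconj θ + (p i + tconj (q j))) + ((x j : ℝ) : T) = _
        rw [hθr, tconj_coe]; abel
      rw [he, coe_add_le_coe_iff]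
      have hrr : (θr - -(x i) : ℝ) = (x i - -θr : ℝ) := by ring
      rw [hrr] at hterm
      exact hterm
    have hGx : ∀ i, tMulV (Trop.Gmat B p q θ g) xb i ≤ xb i :=
      Gmat_mulV_le B p q θ g xb hBx' hDx
    have hGxx : ∀ i, (x i : T) = tSum fun j => Trop.Gmat B p q θ g i j + xb j := by
      intro i
      refine le_antisymm ?_ (hGx i)
      calc ((x i : ℝ) : T) = 0 + xb i := (zero_add _).symm
        _ ≤ Trop.Gmat B p q θ g i i + xb i := add_le_add_left (hGii i) _
        _ ≤ tSum (fun j => Trop.Gmat B p q θ g i j + xb j) :=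
            le_tSum (fun j => Trop.Gmat B p q θ g i j + xb j) i
    refine ⟨xb, ⟨i0, WithBot.coe_ne_bot⟩, hg, ?_, hGxx⟩
    intro i
    set t := tSum fun a => ((-(h a) : ℝ) : T) + Trop.Gmat B p q θ g a i with htdef
    have ht1 : ∀ a, ((-(h a) : ℝ) : T) + Trop.Gmat B p q θ g a i ≤ ((-(x i) : ℝ) : T) := by
      intro a
      have hGa : Trop.Gmat B p q θ g a i + ((x i : ℝ) : T) ≤ ((x a : ℝ) : T) :=
        le_trans (le_tSum (fun j => Trop.Gmat B p q θ g a j + xb j) i) (hGx a)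
      have hGa' : Trop.Gmat B p q θ g a i ≤ ((x a - x i : ℝ) : T) :=
        (add_coe_le_coe_iff _ _ _).mp hGa
      have hha : (-(h a) : ℝ) ≤ -(x a) := neg_le_neg (WithBot.coe_le_coe.mp (hh a))
      calc ((-(h a) : ℝ) : T) + Trop.Gmat B p q θ g a i
          ≤ ((-(x a) : ℝ) : T) + ((x a - x i : ℝ) : T) := add_le_add (coe_mono hha) hGa'
        _ = ((-(x i) : ℝ) : T) := by
            rw [← WithBot.coe_add]
            congr 1
            ring
    have ht : t ≤ ((-(x i) : ℝ) : T) := tSum_le ht1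
    have htb : ((-(h i) : ℝ) : T) ≤ t := by
      calc ((-(h i) : ℝ) : T) = ((-(h i) : ℝ) : T) + 0 := (add_zero _).symm
        _ ≤ ((-(h i) : ℝ) : T) + Trop.Gmat B p q θ g i i := add_le_add_right (hGii i) _
        _ ≤ t := le_tSum (fun a => ((-(h a) : ℝ) : T) + Trop.Gmat B p q θ g a i) i
    have htne : t ≠ ⊥ := by
      intro hb
      rw [hb, le_bot_iff] at htb
      exact WithBot.coe_ne_bot htb
    obtain ⟨tr, htr⟩ := WithBot.ne_bot_iff_exists.mp htne
    rw [← htr] at ht ⊢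
    rw [tconj_coe]
    have : tr ≤ -(x i) := WithBot.coe_le_coe.mp ht
    exact coe_mono (by linarith)
  · rintro ⟨u, hune, hgu, hhu, hxu⟩
    have hxfun : xb = tMulV (Trop.Gmat B p q θ g) u := funext fun l => hxu l
    have hAx : ∀ i, tMulV (Amat B p q θ) xb i ≤ xb i := by
      intro i
      calc tMulV (Amat B p q θ) xb i
          = tMulV (Amat B p q θ) (tMulV (Trop.Gmat B p q θ g) u) i := by rw [← hxfun]
        _ = tMulV (tMulM (Amat B p q θ) (Trop.Gmat B p q θ g)) u i :=
            (tMulV_mulM _ _ _ _).symm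
        _ ≤ tMulV (Trop.Gmat B p q θ g) u i :=
            tMulV_mono_A (fun a b => AG_le_G B p q θ g hn hTr hθ2 hθbot a b) u i
        _ = xb i := by rw [← hxfun]
    have hBx : ∀ i, tMulV B xb i ≤ xb i := fun i =>
      le_trans (tMulV_mono_A (fun a b => le_max_left _ _) xb i) (hAx i)
    have hDx : ∀ i, tMulV (Dmat p q θ) xb i ≤ xb i := fun i =>
      le_trans (tMulV_mono_A (fun a b => le_max_right _ _) xb i) (hAx i)
    have hgx : ∀ i, g i ≤ (x i : T) := by
      intro i
      calc g i ≤ u i := hgu i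
        _ = 0 + u i := (zero_add _).symm
        _ ≤ Trop.Gmat B p q θ g i i + u i := add_le_add_left (hGii i) _
        _ ≤ tSum (fun j => Trop.Gmat B p q θ g i j + u j) :=
            le_tSum (fun j => Trop.Gmat B p q θ g i j + u j) i
        _ = (x i : T) := (hxu i).symm
    have hhx : ∀ a, (x a : T) ≤ ((h a : ℝ) : T) := by
      intro a
      rw [hxu a]
      refine tSum_le fun j => ?_
      have hu := hhu j
      rcases eq_or_ne (tSum fun a' => ((-(h a') : ℝ) : T) + Trop.Gmat B p q θ g a' j) ⊥ with
        hb | hnb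
      · rw [hb] at hu
        have : u j = ⊥ := le_bot_iff.mp hu
        rw [this, tadd_bot]
        exact bot_le
      · obtain ⟨tr, htr⟩ := WithBot.ne_bot_iff_exists.mp hnb
        have h1 : ((-(h a) : ℝ) : T) + Trop.Gmat B p q θ g a j ≤ (tr : T) := by
          rw [htr]
          exact le_tSum (fun a' => ((-(h a') : ℝ) : T) + Trop.Gmat B p q θ g a' j) a
        have h2 : Trop.Gmat B p q θ g a j ≤ ((tr - -(h a) : ℝ) : T) :=
          (coe_add_le_coe_iff _ _ _).mp h1
        have h3 : u j ≤ ((-tr : ℝ) : T) := by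
          rw [← htr] at hu
          rw [tconj_coe] at hu
          exact hu
        calc Trop.Gmat B p q θ g a j + u j
            ≤ ((tr - -(h a) : ℝ) : T) + ((-tr : ℝ) : T) := add_le_add h2 h3
          _ = ((h a : ℝ) : T) := by
              rw [← WithBot.coe_add]
              congr 1
              ring
    have hVle : (tSum fun i => tSum fun j =>
        ((-(x i) : ℝ) : T) + p i + tconj (q j) + (x j : T)) ≤ θ := by
      refine tSum_le fun i => tSum_le fun j => ?_
      have hterm : Dmat p q θ i j + xb j ≤ xb i :=
        le_trans (le_tSum (fun j' => Dmat p q θ i j' + xb j') j) (hDx i)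
      have he : Dmat p q θ i j + xb j
          = ((-θr : ℝ) : T) + ((p i + tconj (q j)) + ((x j : ℝ) : T)) := by
        show (tconj θ + (p i + tconj (q j))) + ((x j : ℝ) : T) = _
        rw [hθr, tconj_coe]; abel
      rw [he, coe_add_le_coe_iff] at hterm
      have he2 : ((-(x i) : ℝ) : T) + p i + tconj (q j) + ((x j : ℝ) : T)
          = ((-(x i) : ℝ) : T) + ((p i + tconj (q j)) + ((x j : ℝ) : T)) := by abel
      rw [he2, hθr, coe_add_le_coe_iff]
      have hrr : (x i - -θr : ℝ) = (θr - -(x i) : ℝ) := by ring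
      rw [hrr] at hterm
      exact hterm
    have hVge := lower_bound B p q θ g h hθdef x hBx hgx hhx
    exact ⟨hBx, hgx, hhx, le_antisymm hVle hVge⟩
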